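/- For all p ≥ 1 and β > 0 with p ≤ 2β, the Bell function satisfies B(p,β)^{1/p} ≤ K₊ · β, where K₊ = exp((e² − 3)/2). -/

import Mathlib

open Real

noncomputable def Bell (p β : ℝ) : ℝ :=
  Real.exp (-β) * ∑' k : ℕ, (k : ℝ) ^ p * β ^ k / (Nat.factorial k)

lemma real_exp_tsum (x : ℝ) : Real.exp x = ∑' n : ℕ, x ^ n / (Nat.factorial n) := by
  rw [Real.exp_eq_exp_ℝ, NormedSpace.exp_eq_tsum_div]

lemma pow_le_exp_aux (p l x : ℝ) (hp : 0 < p) (hl : 0 < l) (hx : 0 ≤ x) :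
    x ^ p ≤ (p / (Real.exp 1 * l)) ^ p * Real.exp (l * x) := by
  have key : x ≤ (p / (Real.exp 1 * l)) * Real.exp (l * x / p) := by
    have h3 : l * x / p ≤ Real.exp (l * x / p) / Real.exp 1 := by
      have := Real.add_one_le_exp (l * x / p - 1)
      rw [Real.exp_sub] at this
      linarith
    have hlp : x = (p / l) * (l * x / p) := by field_simp
    calc x = (p / l) * (l * x / p) := hlp
      _ ≤ (p / l) * (Real.exp (l * x / p) / Real.exp 1) := by
          apply mul_le_mul_of_nonneg_left h3 (by positivity)
      _ = (p / (Real.exp 1 * l)) * Real.exp (l * x / p) := by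
          field_simp
  calc x ^ p ≤ ((p / (Real.exp 1 * l)) * Real.exp (l * x / p)) ^ p := by
        apply Real.rpow_le_rpow hx key (le_of_lt hp)
    _ = (p / (Real.exp 1 * l)) ^ p * Real.exp (l * x / p) ^ p := by
        rw [Real.mul_rpow (by positivity) (by positivity)]
    _ = (p / (Real.exp 1 * l)) ^ p * Real.exp (l * x) := by
        rw [← Real.exp_mul]
        congr 1
        field_simp

theorem bell_upper_Kplus (p β : ℝ) (hp : 1 ≤ p) (hβ : 0 < β) (hpβ : p ≤ 2 * β) :
    Bell p β ^ (1 / p) ≤ Real.exp ((Real.exp 1 ^ 2 - 3) / 2) * β := by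
  have hp0 : 0 < p := lt_of_lt_of_le one_pos hp
  set l : ℝ := p / β with hl_def
  have hl : 0 < l := div_pos hp0 hβ
  have hl2 : l ≤ 2 := by rw [hl_def, div_le_iff₀ hβ]; linarith
  have hcl : p / (Real.exp 1 * l) = β / Real.exp 1 := by
    rw [hl_def]; field_simp
  -- termwise bound
  have hterm : ∀ k : ℕ, (k : ℝ) ^ p * β ^ k / (Nat.factorial k) ≤
      (β / Real.exp 1) ^ p * ((β * Real.exp l) ^ k / (Nat.factorial k)) := by
    intro k
    have h1 : (k : ℝ) ^ p ≤ (β / Real.exp 1) ^ p * Real.exp (l * k) := by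
      rw [← hcl]; exact pow_le_exp_aux p l k hp0 hl (Nat.cast_nonneg k)
    have h2 : Real.exp (l * k) * β ^ k = (β * Real.exp l) ^ k := by
      rw [mul_pow, ← Real.exp_nat_mul]; ring_nf
    have hfk : (0 : ℝ) < (Nat.factorial k : ℝ) := by positivity
    rw [div_le_iff₀ hfk]
    calc (k : ℝ) ^ p * β ^ k ≤ ((β / Real.exp 1) ^ p * Real.exp (l * k)) * β ^ k := by
          apply mul_le_mul_of_nonneg_right h1 (by positivity)
      _ = (β / Real.exp 1) ^ p * (β * Real.exp l) ^ k := by rw [mul_assoc, h2]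
      _ = (β / Real.exp 1) ^ p * ((β * Real.exp l) ^ k / (Nat.factorial k)) *
            (Nat.factorial k) := by field_simp
  have hsum2 : Summable (fun k : ℕ => (β * Real.exp l) ^ k / (Nat.factorial k)) :=
    Real.summable_pow_div_factorial _
  have hsum2' : Summable (fun k : ℕ =>
      (β / Real.exp 1) ^ p * ((β * Real.exp l) ^ k / (Nat.factorial k))) :=
    hsum2.mul_left _
  have hsum1 : Summable (fun k : ℕ => (k : ℝ) ^ p * β ^ k / (Nat.factorial k)) := by
    apply Summable.of_nonneg_of_le (fun k => by positivity) hterm hsum2'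
  have htsum : (∑' k : ℕ, (k : ℝ) ^ p * β ^ k / (Nat.factorial k)) ≤
      (β / Real.exp 1) ^ p * Real.exp (β * Real.exp l) := by
    calc (∑' k : ℕ, (k : ℝ) ^ p * β ^ k / (Nat.factorial k))
        ≤ ∑' k : ℕ, (β / Real.exp 1) ^ p * ((β * Real.exp l) ^ k / (Nat.factorial k)) :=
          Summable.tsum_le_tsum hterm hsum1 hsum2'
      _ = (β / Real.exp 1) ^ p * ∑' k : ℕ, (β * Real.exp l) ^ k / (Nat.factorial k) :=
          tsum_mul_left
      _ = (β / Real.exp 1) ^ p * Real.exp (β * Real.exp l) := by rw [← real_exp_tsum]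
  have hBell : Bell p β ≤ (β / Real.exp 1) ^ p * Real.exp (β * (Real.exp l - 1)) := by
    unfold Bell
    calc Real.exp (-β) * ∑' k : ℕ, (k : ℝ) ^ p * β ^ k / (Nat.factorial k)
        ≤ Real.exp (-β) * ((β / Real.exp 1) ^ p * Real.exp (β * Real.exp l)) := by
          apply mul_le_mul_of_nonneg_left htsum (le_of_lt (Real.exp_pos _))
      _ = (β / Real.exp 1) ^ p * Real.exp (β * (Real.exp l - 1)) := by
          rw [show β * (Real.exp l - 1) = -β + β * Real.exp l by ring, Real.exp_add]
          ring
  have hBell_nonneg : 0 ≤ Bell p β := by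
    unfold Bell
    apply mul_nonneg (le_of_lt (Real.exp_pos _))
    exact tsum_nonneg (fun k => by positivity)
  have hstep : Bell p β ^ (1 / p) ≤
      (β / Real.exp 1) * Real.exp (β * (Real.exp l - 1) / p) := by
    calc Bell p β ^ (1 / p)
        ≤ ((β / Real.exp 1) ^ p * Real.exp (β * (Real.exp l - 1))) ^ (1 / p) :=
          Real.rpow_le_rpow hBell_nonneg hBell (by positivity)
      _ = ((β / Real.exp 1) ^ p) ^ (1 / p) * (Real.exp (β * (Real.exp l - 1))) ^ (1 / p) :=
          Real.mul_rpow (by positivity) (le_of_lt (Real.exp_pos _))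
      _ = (β / Real.exp 1) * Real.exp (β * (Real.exp l - 1) / p) := by
          rw [← Real.rpow_mul (by positivity : (0:ℝ) ≤ β / Real.exp 1), mul_one_div,
            div_self (ne_of_gt hp0), Real.rpow_one, ← Real.exp_mul, mul_one_div]
  -- the exponent simplifies: β (e^l - 1)/p = (e^l - 1)/l
  have hexp_eq : β * (Real.exp l - 1) / p = (Real.exp l - 1) / l := by
    rw [hl_def]; field_simp
  -- convexity: exp l ≤ 1 + (l/2)(e^2 - 1)
  have hconv : Real.exp l ≤ 1 + (l / 2) * (Real.exp 1 ^ 2 - 1) := by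
    have h := convexOn_exp.2 (Set.mem_univ (0 : ℝ)) (Set.mem_univ (2 : ℝ))
      (show (0:ℝ) ≤ 1 - l / 2 by linarith) (show (0:ℝ) ≤ l / 2 by linarith)
      (show (1 - l / 2) + l / 2 = 1 by ring)
    simp only [smul_eq_mul, mul_zero, zero_add, Real.exp_zero] at h
    have he2 : Real.exp 2 = Real.exp 1 ^ 2 := by
      rw [sq, ← Real.exp_add]; norm_num
    have : l / 2 * 2 = l := by ring
    rw [this, he2] at h
    nlinarith [h]
  have hkey : (Real.exp l - 1) / l ≤ (Real.exp 1 ^ 2 - 1) / 2 := by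
    rw [div_le_div_iff₀ hl (by norm_num : (0:ℝ) < 2)]
    nlinarith [hconv]
  calc Bell p β ^ (1 / p)
      ≤ (β / Real.exp 1) * Real.exp ((Real.exp l - 1) / l) := by
        rw [← hexp_eq]; exact hstep
    _ = β * Real.exp ((Real.exp l - 1) / l - 1) := by
        rw [Real.exp_sub]; field_simp
    _ ≤ β * Real.exp ((Real.exp 1 ^ 2 - 3) / 2) := by
        apply mul_le_mul_of_nonneg_left _ (le_of_lt hβ)
        apply Real.exp_le_exp.mpr
        linarith [hkey]
    _ = Real.exp ((Real.exp 1 ^ 2 - 3) / 2) * β := mul_comm _ _
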